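/- Under the exponential sensitivity hypothesis (Σₜ^σ(φ + εIₙ) ⪯ Σₜ^σ(φ) + ε gₜ^σ(φ) with 0 ⪯ gₜ^σ(φ) and tr(gₜ^σ(φ)) ≤ αηᵗ, η ∈ (0,1)), if σ is a feasible schedule then for any two initial covariances φ₁, φ₂, the trajectories converge to each other exponentially: ‖Σₜ^σ(φ₁) − Σₜ^σ(φ₂)‖ ≤ C·ηᵗ for some constant C depending on φ₁, φ₂ but not on t; in particular ‖Σₜ^σ(φ₁) − Σₜ^σ(φ₂)‖ → 0 as t → ∞. -/

import Mathlib

open Matrix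

open scoped Matrix.Norms.L2Operator

/-- The trajectory of the sequential Riccati mapping: `traj ρ σ φ t = Σₜ^σ(φ)`. -/
def traj {n : ℕ} {M : ℕ} (ρ : Fin M → Matrix (Fin n) (Fin n) ℝ → Matrix (Fin n) (Fin n) ℝ)
    (σ : ℕ → Fin M) (φ : Matrix (Fin n) (Fin n) ℝ) : ℕ → Matrix (Fin n) (Fin n) ℝ
  | 0 => φ
  | t + 1 => ρ (σ t) (traj ρ σ φ t)

section Helpers

variable {n : ℕ}

lemma psd_smul {A : Matrix (Fin n) (Fin n) ℝ} (hA : A.PosSemidef) {c : ℝ} (hc : 0 ≤ c) :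
    (c • A).PosSemidef := by
  rw [posSemidef_iff_dotProduct_mulVec]
  constructor
  · show (c • A)ᴴ = c • A
    rw [conjTranspose_smul, hA.1.eq]
    simp
  · intro x
    rw [smul_mulVec, dotProduct_smul, smul_eq_mul]
    exact mul_nonneg hc (hA.dotProduct_mulVec_nonneg x)


lemma psd_entry_abs_le {A : Matrix (Fin n) (Fin n) ℝ} (hA : A.PosSemidef) (i j : Fin n) :
    |A i j| ≤ (A i i + A j j) / 2 := by
  have hsym : A j i = A i j := by
    have h := congrFun (congrFun hA.1 i) j
    simpa [conjTranspose_apply] using h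
  have quad : ∀ c : ℝ, 0 ≤ A i i + c * A i j + c * A j i + c * c * A j j := by
    intro c
    have h := hA.dotProduct_mulVec_nonneg (Pi.single i 1 + Pi.single j c)
    simp only [star_trivial, mulVec_add, mulVec_single, add_dotProduct, single_dotProduct,
      dotProduct_add, Pi.add_apply, mul_one, one_mul, Pi.smul_apply, MulOpposite.smul_eq_mul_unop,
      MulOpposite.unop_op, col_apply] at h
    linarith [h]
  have h1 := quad 1
  have h2 := quad (-1)
  rw [abs_le]
  constructor <;> nlinarith [h1, h2, hsym]

lemma psd_diag_nonneg {A : Matrix (Fin n) (Fin n) ℝ} (hA : A.PosSemidef) (i : Fin n) :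
    0 ≤ A i i := le_trans (abs_nonneg _) (by simpa using psd_entry_abs_le hA i i)

lemma psd_trace_nonneg {A : Matrix (Fin n) (Fin n) ℝ} (hA : A.PosSemidef) :
    0 ≤ A.trace :=
  Finset.sum_nonneg fun i _ => psd_diag_nonneg hA i

lemma psd_norm_le_trace {A : Matrix (Fin n) (Fin n) ℝ} (hA : A.PosSemidef) :
    ‖A‖ ≤ (n : ℝ) * A.trace := by
  have htr : 0 ≤ (n : ℝ) * A.trace :=
    mul_nonneg (Nat.cast_nonneg n) (psd_trace_nonneg hA)
  have hS : ∑ i, ∑ j, |A i j| ≤ (n : ℝ) * A.trace := by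
    calc ∑ i, ∑ j, |A i j| ≤ ∑ i, ∑ j, (A i i + A j j) / 2 :=
          Finset.sum_le_sum fun i _ => Finset.sum_le_sum fun j _ => psd_entry_abs_le hA i j
      _ = (n : ℝ) * A.trace := by
          calc ∑ i : Fin n, ∑ j : Fin n, (A i i + A j j) / 2
              = ∑ i : Fin n, (((n : ℝ) * A i i) / 2 + (∑ j : Fin n, A j j) / 2) := by
                refine Finset.sum_congr rfl fun i _ => ?_
                rw [← Finset.sum_div, Finset.sum_add_distrib, Finset.sum_const,
                  Finset.card_univ, Fintype.card_fin, nsmul_eq_mul, add_div]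
            _ = (n : ℝ) * ∑ i : Fin n, A i i := by
                rw [Finset.sum_add_distrib, Finset.sum_const, Finset.card_univ,
                  Fintype.card_fin, nsmul_eq_mul, ← Finset.sum_div, ← Finset.mul_sum]
                ring
            _ = (n : ℝ) * A.trace := rfl
  rw [Matrix.l2_opNorm_def]
  refine ContinuousLinearMap.opNorm_le_bound _ htr fun x => ?_
  have hx : ∀ j, |x j| ≤ ‖x‖ := by
    intro j
    rw [EuclideanSpace.norm_eq]
    have h1 : |x j| = Real.sqrt (‖x j‖ ^ 2) := by
      rw [Real.sqrt_sq_eq_abs]; simp [Real.norm_eq_abs, abs_abs]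
    rw [h1]
    apply Real.sqrt_le_sqrt
    exact Finset.single_le_sum (f := fun k => ‖x k‖ ^ 2) (fun k _ => sq_nonneg _)
      (Finset.mem_univ j)
  have key : ‖(LinearEquiv.trans toEuclideanLin LinearMap.toContinuousLinearMap) A x‖
      ≤ (∑ i, ∑ j, |A i j|) * ‖x‖ := by
    have happ : (LinearEquiv.trans toEuclideanLin LinearMap.toContinuousLinearMap) A x
        = toEuclideanLin A x := rfl
    rw [happ, toEuclideanLin_apply, EuclideanSpace.norm_eq]
    have step1 : Real.sqrt (∑ i, ‖(WithLp.equiv 2 (Fin n → ℝ)).symm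
          (A *ᵥ (WithLp.equiv 2 (Fin n → ℝ)) x) i‖ ^ 2)
        ≤ ∑ i, |(A *ᵥ (WithLp.equiv 2 (Fin n → ℝ)) x) i| := by
      have : ∀ i, ‖(WithLp.equiv 2 (Fin n → ℝ)).symm (A *ᵥ (WithLp.equiv 2 (Fin n → ℝ)) x) i‖ ^ 2
          = |(A *ᵥ (WithLp.equiv 2 (Fin n → ℝ)) x) i| ^ 2 := by
        intro i; simp [Real.norm_eq_abs, sq_abs]
      rw [Finset.sum_congr rfl fun i _ => this i]
      calc Real.sqrt (∑ i, |(A *ᵥ (WithLp.equiv 2 (Fin n → ℝ)) x) i| ^ 2)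
          ≤ Real.sqrt ((∑ i, |(A *ᵥ (WithLp.equiv 2 (Fin n → ℝ)) x) i|) ^ 2) :=
            Real.sqrt_le_sqrt (Finset.sum_sq_le_sq_sum_of_nonneg fun i _ => abs_nonneg _)
        _ = ∑ i, |(A *ᵥ (WithLp.equiv 2 (Fin n → ℝ)) x) i| :=
            Real.sqrt_sq (Finset.sum_nonneg fun i _ => abs_nonneg _)
    refine step1.trans ?_
    rw [Finset.sum_mul]
    refine Finset.sum_le_sum fun i _ => ?_
    calc |(A *ᵥ (WithLp.equiv 2 (Fin n → ℝ)) x) i| = |∑ j, A i j * x j| := by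
          rw [mulVec, dotProduct]; rfl
      _ ≤ ∑ j, |A i j * x j| := Finset.abs_sum_le_sum_abs _ _
      _ ≤ ∑ j, |A i j| * ‖x‖ := by
          refine Finset.sum_le_sum fun j _ => ?_
          rw [abs_mul]
          exact mul_le_mul_of_nonneg_left (hx j) (abs_nonneg _)
      _ = (∑ j, |A i j|) * ‖x‖ := by rw [Finset.sum_mul]
  exact key.trans (mul_le_mul_of_nonneg_right hS (norm_nonneg _))


end Helpers

/-- Under a feasible schedule, trajectories starting from any two initial
covariances converge to each other exponentially. -/
theorem traj_exponential_convergence {n M : ℕ}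
    (ρ : Fin M → Matrix (Fin n) (Fin n) ℝ → Matrix (Fin n) (Fin n) ℝ)
    (h_mono : ∀ (σ : ℕ → Fin M) (φ₁ φ₂ : Matrix (Fin n) (Fin n) ℝ), φ₁.PosSemidef →
      φ₂.PosSemidef → (φ₂ - φ₁).PosSemidef →
      ∀ t : ℕ, (traj ρ σ φ₂ t - traj ρ σ φ₁ t).PosSemidef)
    (g : (ℕ → Fin M) → Matrix (Fin n) (Fin n) ℝ → ℕ → Matrix (Fin n) (Fin n) ℝ)
    (hg_psd : ∀ σ φ t, φ.PosSemidef → (g σ φ t).PosSemidef)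
    (h_pert : ∀ (σ : ℕ → Fin M) (φ : Matrix (Fin n) (Fin n) ℝ), φ.PosSemidef →
      ∀ (ε : ℝ), 0 ≤ ε → ∀ t : ℕ,
      (traj ρ σ φ t + ε • g σ φ t - traj ρ σ (φ + ε • (1 : Matrix (Fin n) (Fin n) ℝ)) t).PosSemidef)
    (h_exp : ∀ (σ : ℕ → Fin M) (φ : Matrix (Fin n) (Fin n) ℝ), φ.PosSemidef →
      ∃ α : ℝ, 0 ≤ α ∧ ∃ η ∈ Set.Ioo (0 : ℝ) 1, ∀ t : ℕ, (g σ φ t).trace ≤ α * η ^ t)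
    (σ : ℕ → Fin M)
    -- feasibility of `σ`: bounded trajectories from every initial covariance
    (hfeas : ∀ (φ : Matrix (Fin n) (Fin n) ℝ), φ.PosSemidef →
      ∃ β : ℝ, ∀ t : ℕ,
        (β • (1 : Matrix (Fin n) (Fin n) ℝ) - traj ρ σ φ t).PosSemidef)
    (φ₁ φ₂ : Matrix (Fin n) (Fin n) ℝ) (hφ₁ : φ₁.PosSemidef) (hφ₂ : φ₂.PosSemidef) :
    (∃ C : ℝ, 0 ≤ C ∧ ∃ η ∈ Set.Ioo (0 : ℝ) 1, ∀ t : ℕ,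
        ‖traj ρ σ φ₁ t - traj ρ σ φ₂ t‖ ≤ C * η ^ t) ∧
      Filter.Tendsto (fun t => ‖traj ρ σ φ₁ t - traj ρ σ φ₂ t‖)
        Filter.atTop (nhds 0) := by
  obtain ⟨β₁, hβ₁⟩ := hfeas φ₁ hφ₁
  obtain ⟨β₂, hβ₂⟩ := hfeas φ₂ hφ₂
  set ε : ℝ := max 0 (max β₁ β₂) with hεdef
  have hε0 : 0 ≤ ε := le_max_left _ _
  have hub : ∀ (φ : Matrix (Fin n) (Fin n) ℝ) (β : ℝ),
      (∀ t, (β • (1 : Matrix (Fin n) (Fin n) ℝ) - traj ρ σ φ t).PosSemidef) → β ≤ ε →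
      (ε • (1 : Matrix (Fin n) (Fin n) ℝ) - φ).PosSemidef := by
    intro φ β h hβ
    have h0 := h 0
    have htraj0 : traj ρ σ φ 0 = φ := rfl
    rw [htraj0] at h0
    have heq : ε • (1 : Matrix (Fin n) (Fin n) ℝ) - φ
        = (ε - β) • (1 : Matrix (Fin n) (Fin n) ℝ) + (β • 1 - φ) := by
      rw [sub_smul]; abel
    rw [heq]
    exact (psd_smul Matrix.PosSemidef.one (by linarith)).add h0
  have hεφ₁ := hub φ₁ β₁ hβ₁ ((le_max_left β₁ β₂).trans (le_max_right 0 _))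
  have hεφ₂ := hub φ₂ β₂ hβ₂ ((le_max_right β₁ β₂).trans (le_max_right 0 _))
  have hψ₁ : (φ₁ + ε • 1).PosSemidef := hφ₁.add (psd_smul Matrix.PosSemidef.one hε0)
  have hψ₂ : (φ₂ + ε • 1).PosSemidef := hφ₂.add (psd_smul Matrix.PosSemidef.one hε0)
  have hd₂₁ : ((φ₂ + ε • 1) - φ₁).PosSemidef := by
    have h := hφ₂.add hεφ₁
    convert h using 1
    abel
  have hd₁₂ : ((φ₁ + ε • 1) - φ₂).PosSemidef := by
    have h := hφ₁.add hεφ₂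
    convert h using 1
    abel
  have hm₂ := h_mono σ φ₁ (φ₂ + ε • 1) hφ₁ hψ₂ hd₂₁
  have hm₁ := h_mono σ φ₂ (φ₁ + ε • 1) hφ₂ hψ₁ hd₁₂
  have hp₁ := h_pert σ φ₁ hφ₁ ε hε0
  have hp₂ := h_pert σ φ₂ hφ₂ ε hε0
  have hP : ∀ t, (ε • g σ φ₂ t - (traj ρ σ φ₁ t - traj ρ σ φ₂ t)).PosSemidef := by
    intro t
    have h := (hp₂ t).add (hm₂ t)
    convert h using 1
    abel
  have hQ : ∀ t, (ε • g σ φ₁ t + (traj ρ σ φ₁ t - traj ρ σ φ₂ t)).PosSemidef := by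
    intro t
    have h := (hp₁ t).add (hm₁ t)
    convert h using 1
    abel
  obtain ⟨α₁, hα₁, η₁, hη₁, hexp₁⟩ := h_exp σ φ₁ hφ₁
  obtain ⟨α₂, hα₂, η₂, hη₂, hexp₂⟩ := h_exp σ φ₂ hφ₂
  set η : ℝ := max η₁ η₂ with hηdef
  have hη : η ∈ Set.Ioo (0 : ℝ) 1 := ⟨lt_max_of_lt_left hη₁.1, max_lt hη₁.2 hη₂.2⟩
  set C : ℝ := (n : ℝ) * ε * (2 * α₁ + α₂) with hCdef
  have hC0 : 0 ≤ C :=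
    mul_nonneg (mul_nonneg (Nat.cast_nonneg n) hε0) (by linarith)
  have hbound : ∀ t, ‖traj ρ σ φ₁ t - traj ρ σ φ₂ t‖ ≤ C * η ^ t := by
    intro t
    set D := traj ρ σ φ₁ t - traj ρ σ φ₂ t with hD
    have hg₁ := hg_psd σ φ₁ t hφ₁
    have hg₂ := hg_psd σ φ₂ t hφ₂
    have hQn : ‖ε • g σ φ₁ t + D‖ ≤ (n : ℝ) * (ε • g σ φ₁ t + D).trace :=
      psd_norm_le_trace (hQ t)
    have hEn : ‖ε • g σ φ₁ t‖ ≤ (n : ℝ) * (ε • g σ φ₁ t).trace :=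
      psd_norm_le_trace (psd_smul hg₁ hε0)
    have htrD : D.trace ≤ ε * (g σ φ₂ t).trace := by
      have h0 := psd_trace_nonneg (hP t)
      rw [Matrix.trace_sub, Matrix.trace_smul, smul_eq_mul] at h0
      linarith
    have htr1 : (ε • g σ φ₁ t).trace = ε * (g σ φ₁ t).trace := by
      rw [Matrix.trace_smul, smul_eq_mul]
    have htrQ : (ε • g σ φ₁ t + D).trace = ε * (g σ φ₁ t).trace + D.trace := by
      rw [Matrix.trace_add, htr1]
    have hnD : ‖D‖ ≤ ‖ε • g σ φ₁ t + D‖ + ‖ε • g σ φ₁ t‖ := by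
      have h := norm_sub_le (ε • g σ φ₁ t + D) (ε • g σ φ₁ t)
      simpa using h
    have hpow1 : η₁ ^ t ≤ η ^ t := pow_le_pow_left₀ hη₁.1.le (le_max_left _ _) t
    have hpow2 : η₂ ^ t ≤ η ^ t := pow_le_pow_left₀ hη₂.1.le (le_max_right _ _) t
    have key1 : (g σ φ₁ t).trace ≤ α₁ * η ^ t :=
      (hexp₁ t).trans (mul_le_mul_of_nonneg_left hpow1 hα₁)
    have key2 : (g σ φ₂ t).trace ≤ α₂ * η ^ t :=
      (hexp₂ t).trans (mul_le_mul_of_nonneg_left hpow2 hα₂)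
    have e1 : (n : ℝ) * ε * (g σ φ₁ t).trace ≤ (n : ℝ) * ε * (α₁ * η ^ t) :=
      mul_le_mul_of_nonneg_left key1 (mul_nonneg (Nat.cast_nonneg n) hε0)
    have e2 : (n : ℝ) * ε * (g σ φ₂ t).trace ≤ (n : ℝ) * ε * (α₂ * η ^ t) :=
      mul_le_mul_of_nonneg_left key2 (mul_nonneg (Nat.cast_nonneg n) hε0)
    have e3 : (n : ℝ) * D.trace ≤ (n : ℝ) * (ε * (g σ φ₂ t).trace) :=
      mul_le_mul_of_nonneg_left htrD (Nat.cast_nonneg n)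
    calc ‖D‖ ≤ ‖ε • g σ φ₁ t + D‖ + ‖ε • g σ φ₁ t‖ := hnD
      _ ≤ (n : ℝ) * (ε * (g σ φ₁ t).trace + D.trace)
            + (n : ℝ) * (ε * (g σ φ₁ t).trace) := by
          rw [htrQ] at hQn
          rw [htr1] at hEn
          linarith
      _ ≤ C * η ^ t := by
          rw [hCdef]
          nlinarith [e1, e2, e3]
  refine ⟨⟨C, hC0, η, hη, hbound⟩, ?_⟩
  have hlim : Filter.Tendsto (fun t : ℕ => C * η ^ t) Filter.atTop (nhds 0) := by
    have h := tendsto_pow_atTop_nhds_zero_of_lt_one hη.1.le hη.2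
    simpa using h.const_mul C
  exact squeeze_zero (fun t => norm_nonneg _) hbound hlim
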